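/- Let q be an odd prime power, n ≥ 2, and let β ∈ F_{q^{2n}} be an element of multiplicative order (q^n+1)(q−1). Let δ ∈ F_{q^{2n}} \ F_{q^n}, let L(X) be a q-polynomial over F_{q^n}, and set W = {x + δ·L(x) : x ∈ F_{q^n}} and Q(x) = (x + δL(x))·(x + δ^{q^n} L(x)). Then the orbit {β^{2i}·W : i ≥ 0} of W under multiplication by β² is a partial spread of F_{q^{2n}} (i.e., any two distinct members intersect only in 0) if and only if Q is a planar function on F_{q^n}. -/

import Mathlib

/-- In a field, if `g` has order `t > 0` and `u ^ t = 1`, then `u` is a power of `g`. -/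
lemma exists_pow_eq_of_orderOf {F : Type*} [Field F] {g u : F} {t : ℕ} (ht : 0 < t)
    (hg : orderOf g = t) (hu : u ^ t = 1) : ∃ k : ℕ, u = g ^ k := by
  classical
  by_contra hcon
  push_neg at hcon
  have hsub : insert u ((Finset.range t).image (g ^ ·)) ⊆ Polynomial.nthRootsFinset t (1 : F) := by
    intro z hz
    rw [Finset.mem_insert] at hz
    rcases hz with rfl | hz
    · exact (Polynomial.mem_nthRootsFinset ht 1).2 hu
    · obtain ⟨k, _, rfl⟩ := Finset.mem_image.1 hz
      refine (Polynomial.mem_nthRootsFinset ht 1).2 ?_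
      rw [← pow_mul, mul_comm, pow_mul, ← hg, pow_orderOf_eq_one, one_pow]
  have hinj : Set.InjOn (g ^ ·) ↑(Finset.range t) := by
    rw [Finset.coe_range, ← hg]; exact pow_injOn_Iio_orderOf
  have hcard1 : ((Finset.range t).image (g ^ ·)).card = t := by
    rw [Finset.card_image_of_injOn hinj, Finset.card_range]
  have hnotmem : u ∉ (Finset.range t).image (g ^ ·) := by
    intro hmem
    obtain ⟨k, _, hk⟩ := Finset.mem_image.1 hmem
    exact hcon k hk.symm
  have hcard2 : (insert u ((Finset.range t).image (g ^ ·))).card = t + 1 := by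
    rw [Finset.card_insert_of_notMem hnotmem, hcard1]
  have hle := Finset.card_le_card hsub
  have hroots : (Polynomial.nthRootsFinset t (1 : F)).card ≤ t := by
    rw [Polynomial.nthRootsFinset_def]
    exact le_trans (Multiset.toFinset_card_le _) (Polynomial.card_nthRoots t 1)
  omega

/-- **Lemma key (1).** The orbit of `W = {x + δL(x)}` under
multiplication by `β²` is a partial spread iff `Q(x) = (x+δL(x))(x+δ^{qⁿ}L(x))`
is a planar function on `F_{qⁿ}`. -/
theorem partial_spread_iff_planar (q n : ℕ) (hq : Odd q) (hq' : IsPrimePow q) (hn : 2 ≤ n)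
    (K Lf E : Type) [Field K] [Fintype K] [Field Lf] [Field E] [Fintype E]
    [Algebra K Lf] [Algebra Lf E] [Algebra K E] [IsScalarTower K Lf E]
    (hcard : Fintype.card K = q)
    (hdim : Module.finrank K Lf = n) (hdim2 : Module.finrank Lf E = 2)
    (β : E) (hβ : orderOf β = (q ^ n + 1) * (q - 1))
    (δ : E) (hδ : δ ∉ Set.range (algebraMap Lf E))
    (d : Fin n → Lf) (L : Lf → Lf)
    (hL : ∀ x, L x = ∑ i : Fin n, d i * x ^ (q ^ (i : ℕ)))
    (W : Set E)
    (hW : W = {v : E | ∃ x : Lf, v = algebraMap Lf E x + δ * algebraMap Lf E (L x)})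
    (Q : Lf → Lf)
    (hQ : ∀ x, algebraMap Lf E (Q x) =
      (algebraMap Lf E x + δ * algebraMap Lf E (L x)) *
      (algebraMap Lf E x + δ ^ (q ^ n) * algebraMap Lf E (L x))) :
    (∀ i j : ℕ,
        (fun v => β ^ (2 * i) * v) '' W ≠ (fun v => β ^ (2 * j) * v) '' W →
        ((fun v => β ^ (2 * i) * v) '' W ∩ (fun v => β ^ (2 * j) * v) '' W) ⊆ {0}) ↔
      (∀ a : Lf, a ≠ 0 →
        Function.Bijective (fun x => Q (x + a) - Q x - Q a)) := by
  classical
  -- Lf is finite (as finite-dim over finite K)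
  haveI : Module.Finite K Lf := Module.finite_of_finrank_pos (by omega)
  haveI : Finite Lf := Module.finite_of_finite K
  haveI : Fintype Lf := Fintype.ofFinite Lf
  -- characteristic facts
  set p := ringChar K with hpdef
  haveI hpK : CharP K p := ringChar.charP K
  have hp : p.Prime := CharP.char_is_prime K p
  obtain ⟨m, hpm, hqpm⟩ : ∃ m : ℕ+, Nat.Prime p ∧ q = p ^ (m:ℕ) := by
    obtain ⟨m, h1, h2⟩ := FiniteField.card K p
    exact ⟨m, h1, by rw [← hcard, h2]⟩
  haveI : CharP Lf p := charP_of_injective_algebraMap (algebraMap K Lf).injective p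
  haveI : CharP E p := charP_of_injective_algebraMap (algebraMap K E).injective p
  haveI : Fact p.Prime := ⟨hp⟩
  have hq3 : 3 ≤ q := by
    have h2 := hq'.two_le
    have := Nat.odd_iff.1 hq
    omega
  have hpne2 : p ≠ 2 := by
    intro hp2
    have hdvd : p ∣ q := hqpm ▸ dvd_pow_self p m.pos.ne'
    rw [hp2] at hdvd
    rw [Nat.odd_iff] at hq
    omega
  have htwoLf : (2 : Lf) ≠ 0 := by
    intro h
    have h2 : ((2:ℕ) : Lf) = 0 := by exact_mod_cast h
    have := (CharP.cast_eq_zero_iff Lf p 2).1 h2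
    exact hpne2 ((Nat.prime_dvd_prime_iff_eq hp Nat.prime_two).1 this)
  -- cardinalities
  have hcardLf : Fintype.card Lf = q ^ n := by
    rw [Module.card_eq_pow_finrank (K := K) (V := Lf), hcard, hdim]
  have hqn1 : 1 ≤ q ^ n := Nat.one_le_pow _ _ (by omega)
  -- frobenius
  have hfrobadd : ∀ a b : E, (a + b) ^ (q ^ n) = a ^ q ^ n + b ^ q ^ n := by
    intro a b
    have hqn : q ^ n = p ^ ((m:ℕ) * n) := by rw [hqpm, pow_mul]
    rw [hqn]; exact add_pow_char_pow a b p ((m:ℕ)*n)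
  have hfrobsub : ∀ a b : E, (a - b) ^ (q ^ n) = a ^ q ^ n - b ^ q ^ n := by
    intro a b
    have hqn : q ^ n = p ^ ((m:ℕ) * n) := by rw [hqpm, pow_mul]
    rw [hqn]; exact sub_pow_char_pow a b (p := p) (n := (m:ℕ)*n)
  have hfix : ∀ z : Lf, (algebraMap Lf E z) ^ (q ^ n) = algebraMap Lf E z := by
    intro z
    rw [← map_pow]
    congr 1
    rw [← hcardLf]
    exact FiniteField.pow_card z
  have hfinj : Function.Injective (algebraMap Lf E) := (algebraMap Lf E).injective
  -- properties of L
  have hL0 : L 0 = 0 := by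
    rw [hL]
    apply Finset.sum_eq_zero
    intro i _
    rw [zero_pow (by positivity), mul_zero]
  have hLadd : ∀ x y, L (x + y) = L x + L y := by
    intro x y
    rw [hL, hL, hL, ← Finset.sum_add_distrib]
    apply Finset.sum_congr rfl
    intro i _
    have hqi : q ^ (i:ℕ) = p ^ ((m:ℕ) * (i:ℕ)) := by rw [hqpm, pow_mul]
    rw [hqi, add_pow_char_pow x y p ((m:ℕ)*(i:ℕ)), mul_add]
  have hLneg : ∀ x, L (-x) = - L x := by
    intro x
    have := hLadd x (-x)
    rw [add_neg_cancel, hL0] at this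
    linear_combination -this
  have hqnne : q ^ n ≠ 0 := by positivity
  -- the map w
  set w : Lf → E := fun x => algebraMap Lf E x + δ * algebraMap Lf E (L x) with hwdef
  have hWw : W = Set.range w := by
    rw [hW]; ext v; constructor
    · rintro ⟨x, hx⟩; exact ⟨x, hx.symm⟩
    · rintro ⟨x, hx⟩; exact ⟨x, hx.symm⟩
  have hw0 : w 0 = 0 := by simp [hwdef, hL0]
  have hwadd : ∀ x y, w (x + y) = w x + w y := by
    intro x y; simp only [hwdef, hLadd, map_add]; ring
  have hwneg : ∀ x, w (-x) = - w x := by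
    intro x; simp only [hwdef, hLneg, map_neg]; ring
  have hwsub : ∀ x y, w (x - y) = w x - w y := by
    intro x y
    rw [sub_eq_add_neg, hwadd, hwneg, sub_eq_add_neg]
  have hwzero : ∀ x, w x = 0 → x = 0 := by
    intro x hx
    simp only [hwdef] at hx
    by_cases hLx : L x = 0
    · simp only [hLx, map_zero, mul_zero, add_zero] at hx
      exact hfinj (by rw [hx, map_zero])
    · exfalso
      apply hδ
      refine ⟨-(x / L x), ?_⟩
      have hfLx : algebraMap Lf E (L x) ≠ 0 := fun h => hLx (hfinj (by rw [h, map_zero]))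
      rw [map_neg, map_div₀]
      field_simp
      first
      | linear_combination hx
      | linear_combination -hx
      | linear_combination (algebraMap Lf E) (L x) * hx
      | linear_combination -((algebraMap Lf E) (L x) * hx)
  have hwinj : Function.Injective w := by
    intro x y hxy
    have : w (x - y) = 0 := by rw [hwsub, hxy, sub_self]
    have := hwzero _ this
    exact sub_eq_zero.1 this
  -- K-linearity
  have hKfix : ∀ (c : K) (k : ℕ), (algebraMap K Lf c) ^ (q ^ k) = algebraMap K Lf c := by
    intro c k
    induction k with
    | zero => simp
    | succ k ih =>
      rw [pow_succ, pow_mul, ih, ← map_pow]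
      congr 1
      rw [← hcard]
      exact FiniteField.pow_card c
  have hLsmul : ∀ (c : K) (x : Lf), L (algebraMap K Lf c * x) = algebraMap K Lf c * L x := by
    intro c x
    rw [hL, hL, Finset.mul_sum]
    apply Finset.sum_congr rfl
    intro i _
    rw [mul_pow, hKfix]
    ring
  have hwsmul : ∀ (c : K) (x : Lf),
      w (algebraMap K Lf c * x) = algebraMap Lf E (algebraMap K Lf c) * w x := by
    intro c x
    simp only [hwdef, hLsmul, map_mul]
    ring
  -- Q basics
  have hQN : ∀ x, algebraMap Lf E (Q x) = w x * (w x) ^ (q ^ n) := by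
    intro x
    rw [hQ]
    have h1 : (w x) ^ (q^n) = algebraMap Lf E x + δ ^ (q^n) * algebraMap Lf E (L x) := by
      simp only [hwdef]
      rw [hfrobadd, mul_pow, hfix, hfix]
    rw [h1]
  have hQ0 : Q 0 = 0 := by
    apply hfinj
    rw [hQN, hw0, map_zero, zero_mul]
  have hQzero : ∀ x, Q x = 0 → x = 0 := by
    intro x hx
    apply hwzero
    have h1 := hQN x
    rw [hx, map_zero] at h1
    rcases mul_eq_zero.1 h1.symm with h | h
    · exact h
    · exact (pow_eq_zero_iff hqnne).1 h
  have hpar : ∀ x y, Q (x+y) + Q (x-y) = 2*Q x + 2*Q y := by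
    intro x y
    apply hfinj
    rw [map_add, hQN, hQN, hwadd, hwsub, hfrobadd, hfrobsub,
      show algebraMap Lf E (2*Q x + 2*Q y)
        = 2 * algebraMap Lf E (Q x) + 2 * algebraMap Lf E (Q y) by
        rw [map_add, map_mul, map_mul, map_ofNat],
      hQN, hQN]
    ring
  have hBf : ∀ x y, algebraMap Lf E (Q (x+y) - Q x - Q y)
      = w x * (w y) ^ (q^n) + (w x) ^ (q^n) * w y := by
    intro x y
    rw [map_sub, map_sub, hQN, hQN, hQN, hwadd, hfrobadd]
    ring
  -- planar implies two-to-one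
  have hP2 : (∀ a : Lf, a ≠ 0 → Function.Bijective (fun x => Q (x + a) - Q x - Q a)) →
      ∀ X Y, Q X = Q Y → X = Y ∨ X = -Y := by
    intro hP X Y hXY
    by_cases hxy : X = Y
    · exact Or.inl hxy
    · right
      have ha : X - Y ≠ 0 := sub_ne_zero.2 hxy
      have hbij := hP (X - Y) ha
      have e1 := hpar X X
      rw [sub_self, hQ0] at e1
      have e2 := hpar X Y
      have hv1 : Q (X + Y + (X - Y)) - Q (X + Y) - Q (X - Y) = 0 := by
        have hXX : X + Y + (X - Y) = X + X := by ring
        rw [hXX]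
        linear_combination e1 - e2 + 2 * hXY
      have hv0 : Q (0 + (X - Y)) - Q 0 - Q (X - Y) = 0 := by
        rw [zero_add, hQ0]; ring
      have := hbij.1 (a₁ := X + Y) (a₂ := 0) (by simp only; rw [hv1, hv0])
      linear_combination this
  -- two-to-one implies planar
  have hP3 : (∀ X Y, Q X = Q Y → X = Y ∨ X = -Y) →
      ∀ a : Lf, a ≠ 0 → Function.Bijective (fun x => Q (x + a) - Q x - Q a) := by
    intro h21 a ha
    rw [← Finite.injective_iff_bijective]
    intro x₁ x₂ hxx
    simp only at hxx
    by_contra hne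
    set e := x₁ - x₂ with he_def
    have he : e ≠ 0 := sub_ne_zero.2 hne
    -- E-side bilinear identity
    have hBB : w x₁ * (w a) ^ (q^n) + (w x₁) ^ (q^n) * w a
        = w x₂ * (w a) ^ (q^n) + (w x₂) ^ (q^n) * w a := by
      rw [← hBf, ← hBf]
      exact congrArg _ (by linear_combination hxx)
    have hwe : w e = w x₁ - w x₂ := hwsub x₁ x₂
    have hwe2 : (w e) ^ (q^n) = (w x₁) ^ (q^n) - (w x₂) ^ (q^n) := by
      rw [hwe, hfrobsub]
    have h0 : w e * (w a) ^ (q^n) + (w e) ^ (q^n) * w a = 0 := by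
      rw [hwe2, hwe]
      linear_combination hBB
    have hQQ : Q (a + e) = Q (a - e) := by
      apply hfinj
      rw [hQN, hQN, hwadd a e, hwsub a e, hfrobadd (w a) (w e), hfrobsub (w a) (w e)]
      linear_combination 2 * h0
    rcases h21 _ _ hQQ with h | h
    · have : (2:Lf) * e = 0 := by linear_combination h
      rcases mul_eq_zero.1 this with h' | h'
      · exact htwoLf h'
      · exact he h'
    · have : (2:Lf) * a = 0 := by linear_combination h
      rcases mul_eq_zero.1 this with h' | h'
      · exact htwoLf h'
      · exact ha h'
  -- order facts about β
  obtain ⟨s, hs, hs1⟩ : ∃ s, q - 1 = 2 * s ∧ 1 ≤ s := by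
    rcases hq with ⟨r, hr⟩
    exact ⟨r, by omega, by omega⟩
  have hβD : β ^ ((q ^ n + 1) * (q - 1)) = 1 := by
    rw [← hβ]; exact pow_orderOf_eq_one β
  have hordpos : 0 < (q ^ n + 1) * (q - 1) := by
    have : 0 < q - 1 := by omega
    positivity
  have hβne : β ≠ 0 := by
    intro h
    rw [h, zero_pow hordpos.ne'] at hβD
    exact zero_ne_one hβD
  have hNz : ∀ z : Lf, (w z) ^ (q ^ n + 1) = algebraMap Lf E (Q z) := by
    intro z
    rw [pow_succ, hQN z]
    ring
  constructor
  · -- partial spread → planar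
    intro hS
    apply hP3
    intro X Y hXY
    by_cases hX0 : X = 0
    · subst hX0
      rw [hQ0] at hXY
      left
      rw [hQzero Y hXY.symm]
    · by_cases hY0 : Y = 0
      · subst hY0
        rw [hQ0] at hXY
        exact absurd (hQzero X hXY) hX0
      · have hwX : w X ≠ 0 := fun h => hX0 (hwzero X h)
        have hwY : w Y ≠ 0 := fun h => hY0 (hwzero Y h)
        have hfQY : algebraMap Lf E (Q Y) ≠ 0 := by
          intro h
          exact hY0 (hQzero Y (hfinj (by rw [h, map_zero])))
        obtain ⟨u, hu_def⟩ : ∃ u : E, u = w X / w Y := ⟨_, rfl⟩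
        have hu0 : u ≠ 0 := by rw [hu_def]; exact div_ne_zero hwX hwY
        have huN : u ^ (q ^ n + 1) = 1 := by
          rw [hu_def, div_pow, hNz X, hNz Y, hXY, div_self hfQY]
        have hut : u ^ ((q ^ n + 1) * (q - 1)) = 1 := by
          rw [pow_mul, huN, one_pow]
        obtain ⟨r, hr⟩ := exists_pow_eq_of_orderOf hordpos hβ hut
        obtain ⟨k, hk⟩ : ∃ k, r = 2 * k := by
          have hβpow : β ^ (r * ((q ^ n + 1) * s)) = 1 := by
            rw [pow_mul, ← hr, pow_mul, huN, one_pow]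
          have hdvd := orderOf_dvd_of_pow_eq_one hβpow
          rw [hβ] at hdvd
          obtain ⟨c, hc⟩ := hdvd
          have hA : 0 < (q ^ n + 1) * s := by positivity
          have h2 : r * ((q ^ n + 1) * s) = 2 * c * ((q ^ n + 1) * s) := by
            rw [hc, hs]; ring
          exact ⟨c, Nat.eq_of_mul_eq_mul_right hA h2⟩
        have hu_eq : u = β ^ (2 * k) := by rw [hr, hk]
        have hwXW : w X ∈ W := by rw [hWw]; exact ⟨X, rfl⟩
        have hwYW : w Y ∈ W := by rw [hWw]; exact ⟨Y, rfl⟩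
        have hrel : w X = β ^ (2 * k) * w Y := by
          rw [← hu_eq, hu_def, div_mul_cancel₀ _ hwY]
        have hWeq : (fun v => β ^ (2 * k) * v) '' W = (fun v => β ^ (2 * 0) * v) '' W := by
          by_contra hne
          have hsub := hS k 0 hne
          have hmem : w X ∈ ((fun v => β ^ (2 * k) * v) '' W ∩ (fun v => β ^ (2 * 0) * v) '' W) := by
            constructor
            · exact ⟨w Y, hwYW, hrel.symm⟩
            · exact ⟨w X, hwXW, by norm_num⟩
          have := hsub hmem
          simp only [Set.mem_singleton_iff] at this
          exact hwX this
        have hWmul : ∀ z : Lf, ∃ y : Lf, u * w z = w y := by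
          intro z
          have h1 : β ^ (2 * k) * w z ∈ (fun v => β ^ (2 * k) * v) '' W :=
            ⟨w z, by rw [hWw]; exact ⟨z, rfl⟩, rfl⟩
          rw [hWeq] at h1
          obtain ⟨v', hv', hv'eq⟩ := h1
          rw [hWw] at hv'
          obtain ⟨y, hy⟩ := hv'
          refine ⟨y, ?_⟩
          have hv'eq' : β ^ (2 * 0) * v' = β ^ (2 * k) * w z := hv'eq
          rw [hu_eq, ← hv'eq', hy]
          norm_num
        obtain ⟨T, hT_def⟩ : ∃ T : Finset E, T = (Finset.univ.image w).erase 0 := ⟨_, rfl⟩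
        have hTcard : T.card = q ^ n - 1 := by
          rw [hT_def, Finset.card_erase_of_mem
            (Finset.mem_image.2 ⟨0, Finset.mem_univ _, hw0⟩),
            Finset.card_image_of_injective _ hwinj, Finset.card_univ, hcardLf]
        have hmapT : ∀ z ∈ T, u * z ∈ T := by
          intro z hz
          rw [hT_def, Finset.mem_erase, Finset.mem_image] at hz
          obtain ⟨hz0, x', _, hx'⟩ := hz
          obtain ⟨y, hy⟩ := hWmul x'
          rw [hT_def, Finset.mem_erase]
          refine ⟨mul_ne_zero hu0 hz0, ?_⟩
          refine Finset.mem_image.2 ⟨y, Finset.mem_univ _, ?_⟩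
          rw [← hy, hx']
        have himgT : T.image (fun z => u * z) = T := by
          apply Finset.eq_of_subset_of_card_le
          · intro z hz
            obtain ⟨z', hz', rfl⟩ := Finset.mem_image.1 hz
            exact hmapT z' hz'
          · rw [Finset.card_image_of_injective _ (mul_right_injective₀ hu0)]
        have hprodT : ∏ z ∈ T, z ≠ 0 := by
          rw [Finset.prod_ne_zero_iff]
          intro z hz
          rw [hT_def, Finset.mem_erase] at hz
          exact hz.1
        have hupow : u ^ T.card * ∏ z ∈ T, z = ∏ z ∈ T, z := by
          have h1 : u ^ T.card * ∏ z ∈ T, z = ∏ z ∈ T, (u * z) := by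
            rw [Finset.prod_mul_distrib, Finset.prod_const]
          have h2 : ∏ z ∈ T.image (fun z => u * z), z = ∏ z ∈ T, (u * z) :=
            Finset.prod_image (fun a _ b _ h => mul_right_injective₀ hu0 h)
          rw [h1, ← h2, himgT]
        have hucard : u ^ (q ^ n - 1) = 1 := by
          rw [← hTcard]
          have h1 : u ^ T.card * ∏ z ∈ T, z = 1 * ∏ z ∈ T, z := by
            rw [one_mul, hupow]
          exact mul_right_cancel₀ hprodT h1
        have hu2 : u ^ 2 = 1 := by
          have h1 : u ^ (q ^ n - 1) * u ^ 2 = 1 := by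
            rw [← pow_add, show q ^ n - 1 + 2 = q ^ n + 1 by omega, huN]
          rw [hucard, one_mul] at h1
          exact h1
        have hfact : (u - 1) * (u + 1) = 0 := by linear_combination hu2
        rcases mul_eq_zero.1 hfact with h | h
        · left
          apply hwinj
          have hu1 : u = 1 := by linear_combination h
          rw [hu_def] at hu1
          exact (div_eq_one_iff_eq hwY).1 hu1
        · right
          apply hwinj
          have hu1 : u = -1 := by linear_combination h
          rw [hu_def, div_eq_iff hwY] at hu1
          rw [hwneg Y, hu1]
          ring
  · -- planar → partial spread
    intro hP i j hne v hv
    simp only [Set.mem_singleton_iff]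
    by_contra hv0
    obtain ⟨h1, h2⟩ := hv
    obtain ⟨a1, ha1W, ha1⟩ := h1
    obtain ⟨a2, ha2W, ha2⟩ := h2
    rw [hWw] at ha1W ha2W
    obtain ⟨x, hx⟩ := ha1W
    obtain ⟨y, hy⟩ := ha2W
    have hvi : β ^ (2 * i) * w x = v := by rw [hx]; exact ha1
    have hvj : β ^ (2 * j) * w y = v := by rw [hy]; exact ha2
    have hwx0 : w x ≠ 0 := by
      intro h; apply hv0; rw [← hvi, h, mul_zero]
    have hwy0 : w y ≠ 0 := by
      intro h; apply hv0; rw [← hvj, h, mul_zero]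
    have hrel : β ^ (2 * i) * w x = β ^ (2 * j) * w y := by rw [hvi, hvj]
    have hnorm : β ^ (2 * i * (q ^ n + 1)) * algebraMap Lf E (Q x)
        = β ^ (2 * j * (q ^ n + 1)) * algebraMap Lf E (Q y) := by
      have hcong := congrArg (fun z : E => z * z ^ (q ^ n)) hrel
      have hexp : ∀ (kk : ℕ) (z : Lf), (β ^ (2 * kk) * w z) * (β ^ (2 * kk) * w z) ^ (q ^ n)
          = β ^ (2 * kk * (q ^ n + 1)) * algebraMap Lf E (Q z) := by
        intro kk z
        rw [mul_pow, ← pow_mul, hQN z,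
          show 2 * kk * (q ^ n + 1) = 2 * kk + 2 * kk * q ^ n by ring, pow_add]
        ring
      rw [hexp i x, hexp j y] at hcong
      exact hcong
    obtain ⟨t, ht⟩ : ∃ t, 2 * s = t + 1 := ⟨2 * s - 1, by omega⟩
    obtain ⟨c, hc_def⟩ : ∃ c : E,
        c = β ^ (2 * j * (q ^ n + 1) + 2 * i * (q ^ n + 1) * t) := ⟨_, rfl⟩
    have hc_rel : c * β ^ (2 * i * (q ^ n + 1)) = β ^ (2 * j * (q ^ n + 1)) := by
      rw [hc_def, ← pow_add]
      have hexp2 : 2 * j * (q ^ n + 1) + 2 * i * (q ^ n + 1) * t + 2 * i * (q ^ n + 1)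
          = 2 * j * (q ^ n + 1) + ((q ^ n + 1) * (q - 1)) * (2 * i) := by
        rw [hs, ht]
        ring
      rw [hexp2, pow_add, pow_mul β ((q ^ n + 1) * (q - 1)) (2 * i), hβD, one_pow, mul_one]
    have hc_s : c ^ s = 1 := by
      rw [hc_def, ← pow_mul,
        show (2 * j * (q ^ n + 1) + 2 * i * (q ^ n + 1) * t) * s
          = ((q ^ n + 1) * (q - 1)) * (j + i * t) by rw [hs]; ring,
        pow_mul β ((q ^ n + 1) * (q - 1)), hβD, one_pow]
    have hfQ : algebraMap Lf E (Q x) = c * algebraMap Lf E (Q y) := by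
      have hβi : β ^ (2 * i * (q ^ n + 1)) ≠ 0 := pow_ne_zero _ hβne
      apply mul_left_cancel₀ hβi
      rw [hnorm, ← hc_rel]
      ring
    -- c is the square of an element of K
    obtain ⟨γ, hγ⟩ := IsCyclic.exists_generator (α := Kˣ)
    have hordγ : orderOf (algebraMap K E (γ : K)) = q - 1 := by
      have h1 := orderOf_injective (algebraMap K E).toMonoidHom (algebraMap K E).injective (γ : K)
      simp only [RingHom.toMonoidHom_eq_coe, MonoidHom.coe_coe] at h1
      rw [h1, orderOf_units, orderOf_eq_card_of_forall_mem_zpowers hγ,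
        Nat.card_eq_fintype_card, Fintype.card_units, hcard]
    have hc_q1 : c ^ (q - 1) = 1 := by
      rw [hs, mul_comm, pow_mul, hc_s, one_pow]
    obtain ⟨k', hk'⟩ := exists_pow_eq_of_orderOf (t := q - 1) (by omega) hordγ hc_q1
    obtain ⟨k2, hk2⟩ : ∃ k2, k' = 2 * k2 := by
      have hpow : (algebraMap K E (γ : K)) ^ (k' * s) = 1 := by
        rw [pow_mul, ← hk', hc_s]
      have hdvd := orderOf_dvd_of_pow_eq_one hpow
      rw [hordγ] at hdvd
      obtain ⟨cc, hcc⟩ := hdvd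
      have h2 : k' * s = 2 * cc * s := by rw [hcc, hs]; ring
      exact ⟨cc, Nat.eq_of_mul_eq_mul_right (by omega) h2⟩
    obtain ⟨lam, hlam_def⟩ : ∃ lam : K, lam = (γ : K) ^ k2 := ⟨_, rfl⟩
    have hlam0 : lam ≠ 0 := by
      rw [hlam_def]; exact pow_ne_zero _ (Units.ne_zero γ)
    have hc_lam : c = algebraMap K E lam ^ 2 := by
      rw [hk', hk2, hlam_def, map_pow, ← pow_mul, Nat.mul_comm]
    obtain ⟨lamL, hlamL_def⟩ : ∃ lamL : Lf, lamL = algebraMap K Lf lam := ⟨_, rfl⟩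
    have hjlam : algebraMap Lf E lamL = algebraMap K E lam := by
      rw [hlamL_def, ← IsScalarTower.algebraMap_apply]
    have hQsc : Q (lamL * y) = lamL ^ 2 * Q y := by
      apply hfinj
      have hw1 : w (lamL * y) = algebraMap Lf E lamL * w y := by
        rw [hlamL_def]
        exact hwsmul lam y
      rw [hQN (lamL * y), hw1, map_mul, map_pow, hQN y, mul_pow, hfix lamL]
      ring
    have hQxy : Q x = Q (lamL * y) := by
      apply hfinj
      calc algebraMap Lf E (Q x)
          = algebraMap Lf E lamL ^ 2 * algebraMap Lf E (Q y) := by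
            rw [hfQ, hc_lam, hjlam]
        _ = algebraMap Lf E (lamL ^ 2 * Q y) := by rw [map_mul, map_pow]
        _ = algebraMap Lf E (Q (lamL * y)) := by rw [hQsc]
    -- in both cases we get a nonzero scalar from K
    have hfinal : ∀ c0 : K, c0 ≠ 0 → w x = algebraMap K E c0 * w y → False := by
      intro c0 hc0 hwxy
      have hjc0 : algebraMap K E c0 ≠ 0 := by
        rw [Ne, map_eq_zero]
        exact hc0
      have hb : β ^ (2 * j) = β ^ (2 * i) * algebraMap K E c0 := by
        apply mul_right_cancel₀ hwy0
        rw [mul_assoc, ← hwxy]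
        exact hrel.symm
      apply hne
      ext v'
      simp only [Set.mem_image]
      constructor
      · rintro ⟨a', ha'W, ha'⟩
        rw [hWw] at ha'W
        obtain ⟨z, hz⟩ := ha'W
        refine ⟨w (algebraMap K Lf (c0⁻¹) * z), by rw [hWw]; exact ⟨_, rfl⟩, ?_⟩
        rw [← hz] at ha'
        rw [hwsmul (c0⁻¹) z, ← IsScalarTower.algebraMap_apply, map_inv₀, hb, ← ha']
        field_simp
      · rintro ⟨a', ha'W, ha'⟩
        rw [hWw] at ha'W
        obtain ⟨z, hz⟩ := ha'W
        refine ⟨w (algebraMap K Lf c0 * z), by rw [hWw]; exact ⟨_, rfl⟩, ?_⟩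
        rw [← hz] at ha'
        rw [hwsmul c0 z, ← IsScalarTower.algebraMap_apply, ← ha', hb]
        ring
    rcases hP2 hP x (lamL * y) hQxy with hcase | hcase
    · refine hfinal lam hlam0 ?_
      rw [hcase, hlamL_def, hwsmul lam y, ← IsScalarTower.algebraMap_apply]
    · refine hfinal (-lam) (neg_ne_zero.2 hlam0) ?_
      have hxneg : x = -(lamL * y) := hcase
      rw [hxneg, hwneg, hlamL_def, hwsmul lam y, ← IsScalarTower.algebraMap_apply, map_neg]
      ring
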